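/- (Effective dimension bound.) Let b > 1, β > 0 and λ > 0 be real numbers, and let l : ℕ≥1 → ℝ be a sequence with 0 ≤ l_k ≤ β·k^{−b} for all k ≥ 1. Then the series Σ_{k=1}^∞ l_k/(l_k + λ) converges and Σ_{k=1}^∞ l_k/(l_k + λ) ≤ β^{1/b} · ((π/b)/sin(π/b)) · λ^{−1/b}. -/

import Mathlib

open Real

section Aux
open Set MeasureTheory

private lemma subst_img : (fun t : ℝ => t / (1 + t)) '' Ioi 0 = Ioo 0 1 := by
  ext u
  constructor
  · rintro ⟨t, ht, rfl⟩
    have ht0 : (0:ℝ) < t := mem_Ioi.1 ht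
    have h1 : (0:ℝ) < 1 + t := by linarith
    exact ⟨by positivity, by rw [div_lt_one h1]; linarith⟩
  · rintro ⟨hu0, hu1⟩
    have h1u : (0:ℝ) < 1 - u := by linarith
    refine ⟨u / (1 - u), mem_Ioi.2 (div_pos hu0 h1u), ?_⟩
    have h2 : 1 + u/(1-u) = 1/(1-u) := by field_simp; ring
    simp only [h2]
    rw [div_div_div_eq]; field_simp



lemma beta_reflection (s : ℝ) (h0 : 0 < s) (h1 : s < 1) :
    ∫ x in (0:ℝ)..1, x ^ (s-1) * (1-x) ^ (-s) = π / Real.sin (π * s) := by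
  have key : Complex.betaIntegral s (1 - s) = ((π / Real.sin (π * s) : ℝ) : ℂ) := by
    have h := Complex.Gamma_mul_Gamma_eq_betaIntegral (s := (s:ℂ)) (t := 1 - s)
      (by simpa using h0) (by simp [h1])
    rw [show (s:ℂ) + (1 - s) = 1 by ring, Complex.Gamma_one, one_mul] at h
    rw [← h, Complex.Gamma_mul_Gamma_one_sub]
    push_cast
    rfl
  have congr1 : Complex.betaIntegral s (1 - s)
      = ((∫ x in (0:ℝ)..1, x ^ (s-1) * (1-x) ^ (-s) : ℝ) : ℂ) := by
    rw [Complex.betaIntegral, ← intervalIntegral.integral_ofReal]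
    refine intervalIntegral.integral_congr fun x hx => ?_
    rw [uIcc_of_le zero_le_one] at hx
    push_cast
    rw [Complex.ofReal_cpow hx.1, Complex.ofReal_cpow (by linarith [hx.2] : (0:ℝ) ≤ 1 - x)]
    push_cast
    ring_nf
  have := congr1.symm.trans key
  exact_mod_cast this



lemma integral_rpow_div_one_add (s : ℝ) (h0 : 0 < s) (h1 : s < 1) :
    ∫ t in Set.Ioi (0:ℝ), t ^ (s-1) / (1+t) = π / Real.sin (π * s) := by
  have hderiv : ∀ t ∈ Ioi (0:ℝ),
      HasDerivWithinAt (fun t : ℝ => t / (1 + t)) ((1+t)^2)⁻¹ (Ioi 0) t := by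
    intro t ht
    have h1t : (1:ℝ) + t ≠ 0 := by linarith [mem_Ioi.1 ht]
    have := (hasDerivAt_id t).div ((hasDerivAt_const t 1).add (hasDerivAt_id t)) h1t
    convert this.hasDerivWithinAt using 1
    · rfl
    · rfl
    · rfl
    · simp
  have hinj : InjOn (fun t : ℝ => t / (1 + t)) (Ioi 0) := by
    intro x hx y hy h
    have hx1 : (1:ℝ) + x ≠ 0 := by linarith [mem_Ioi.1 hx]
    have hy1 : (1:ℝ) + y ≠ 0 := by linarith [mem_Ioi.1 hy]
    field_simp at h
    linarith
  have cov := integral_image_eq_integral_abs_deriv_smul measurableSet_Ioi hderiv hinj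
    (fun u => u ^ (s-1) * (1-u) ^ (-s))
  rw [subst_img] at cov
  have eqL : ∫ u in Ioo (0:ℝ) 1, u ^ (s-1) * (1-u) ^ (-s) = π / Real.sin (π * s) := by
    rw [← MeasureTheory.integral_Ioc_eq_integral_Ioo,
      ← intervalIntegral.integral_of_le zero_le_one]
    exact beta_reflection s h0 h1
  have eqR : ∫ t in Ioi (0:ℝ), |((1+t)^2)⁻¹| • ((t/(1+t)) ^ (s-1) * (1-t/(1+t)) ^ (-s))
      = ∫ t in Set.Ioi (0:ℝ), t ^ (s-1) / (1+t) := by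
    refine setIntegral_congr_fun measurableSet_Ioi fun t ht => ?_
    have ht0 : (0:ℝ) < t := mem_Ioi.1 ht
    have h1t : (0:ℝ) < 1 + t := by linarith
    have e1 : (1:ℝ) - t/(1+t) = (1+t)⁻¹ := by field_simp; ring
    rw [e1, abs_of_pos (by positivity), smul_eq_mul,
      Real.div_rpow ht0.le h1t.le, Real.inv_rpow h1t.le, Real.rpow_neg h1t.le, inv_inv]
    have h2 : (1+t) ^ s = (1+t) ^ (s-1) * (1+t) := by
      nth_rewrite 1 [show s = (s-1) + 1 by ring]
      rw [Real.rpow_add_one (ne_of_gt h1t)]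
    rw [h2]
    have h3 : (1+t) ^ (s-1) ≠ 0 := ne_of_gt (Real.rpow_pos_of_pos h1t _)
    field_simp
  rw [← eqR, ← cov, eqL]

lemma integral_inv_one_add_rpow {b : ℝ} (hb : 1 < b) :
    ∫ x in Set.Ioi (0:ℝ), (1 + x ^ b)⁻¹ = (π / b) / Real.sin (π / b) := by
  have hb0 : (0:ℝ) < b := by linarith
  set s : ℝ := 1 / b with hs
  have hs0 : 0 < s := by positivity
  have hs1 : s < 1 := by rw [hs, div_lt_one hb0]; linarith
  have h := MeasureTheory.integral_comp_rpow_Ioi_of_pos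
    (g := fun t => t ^ (s-1) / (1+t)) hb0
  have e : ∫ x in Set.Ioi (0:ℝ), (b * x ^ (b-1)) • ((x^b) ^ (s-1) / (1 + x^b))
      = ∫ x in Set.Ioi (0:ℝ), b * (1 + x ^ b)⁻¹ := by
    refine setIntegral_congr_fun measurableSet_Ioi fun x hx => ?_
    have hx0 : (0:ℝ) < x := mem_Ioi.1 hx
    have hbs : b * (s - 1) = 1 - b := by rw [hs]; field_simp
    rw [smul_eq_mul, ← Real.rpow_mul hx0.le, hbs]
    have hone : x ^ (b-1) * x ^ (1-b) = 1 := by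
      rw [← Real.rpow_add hx0]; norm_num
    calc b * x ^ (b-1) * (x ^ (1-b) / (1 + x^b))
        = b * (x ^ (b-1) * x ^ (1-b)) * (1 + x^b)⁻¹ := by ring
      _ = b * (1 + x^b)⁻¹ := by rw [hone, mul_one]
  rw [e] at h
  rw [MeasureTheory.integral_const_mul] at h
  rw [integral_rpow_div_one_add s hs0 hs1] at h
  have hπ : π * s = π / b := by rw [hs]; ring
  rw [hπ] at h
  have hbne : b ≠ 0 := ne_of_gt hb0
  have : ∫ x in Set.Ioi (0:ℝ), (1 + x ^ b)⁻¹ = (π / Real.sin (π/b)) / b := by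
    rw [eq_div_iff hbne, mul_comm]; exact h
  rw [this, div_div, div_div, mul_comm]

lemma integrable_f {b c : ℝ} (hb : 1 < b) (hc : 0 < c) :
    IntegrableOn (fun x : ℝ => (1 + c * x ^ b)⁻¹) (Set.Ioi 0) := by
  have hb0 : (0:ℝ) ≤ b := by linarith
  have cont : ContinuousOn (fun x : ℝ => (1 + c * x ^ b)⁻¹) (Ici 0) := by
    refine ContinuousOn.inv₀ (continuousOn_const.add (continuousOn_const.mul
      (continuousOn_id.rpow_const fun x _ => Or.inr hb0))) fun x hx => ?_
    have : (0:ℝ) ≤ x ^ b := Real.rpow_nonneg hx _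
    positivity
  have I1 : IntegrableOn (fun x : ℝ => (1 + c * x ^ b)⁻¹) (Set.Ioc 0 1) :=
    ((cont.mono (Icc_subset_Ici_self (a := (1:ℝ)) (b := 0))).integrableOn_Icc).mono_set
      Ioc_subset_Icc_self
  have I2 : IntegrableOn (fun x : ℝ => (1 + c * x ^ b)⁻¹) (Set.Ioi 1) := by
    have hg : IntegrableOn (fun x : ℝ => c⁻¹ * x ^ (-b)) (Set.Ioi 1) :=
      (integrableOn_Ioi_rpow_of_lt (by linarith) one_pos).const_mul c⁻¹
    refine hg.integrable.mono ((cont.mono ?_).aestronglyMeasurable measurableSet_Ioi) ?_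
    · exact fun x hx => le_of_lt (lt_trans one_pos (mem_Ioi.1 hx))
    · filter_upwards [ae_restrict_mem measurableSet_Ioi] with x hx
      have hx1 : (1:ℝ) < x := mem_Ioi.1 hx
      have hx0 : (0:ℝ) < x := lt_trans one_pos hx1
      have hxb : (0:ℝ) < x ^ b := Real.rpow_pos_of_pos hx0 _
      have h1 : (0:ℝ) < 1 + c * x ^ b := by positivity
      rw [Real.norm_eq_abs, Real.norm_eq_abs, abs_of_pos (inv_pos.2 h1),
        abs_of_pos (by positivity : (0:ℝ) < c⁻¹ * x ^ (-b))]
      rw [Real.rpow_neg hx0.le, ← mul_inv]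
      exact inv_anti₀ (by positivity) (by linarith)
  have : Set.Ioc (0:ℝ) 1 ∪ Set.Ioi 1 = Set.Ioi 0 := Ioc_union_Ioi_eq_Ioi zero_le_one
  rw [← this]
  exact I1.union I2

end Aux

section Main
open Set MeasureTheory





/-- **Effective dimension bound.** If `b > 1`, `β > 0`, `λ > 0` and `0 ≤ l_k ≤ β·k^{-b}`
for all `k ≥ 1`, then `∑_{k=1}^∞ l_k/(l_k + λ)` converges and is bounded by
`β^{1/b} · ((π/b)/sin(π/b)) · λ^{-1/b}`. -/
theorem effective_dimension_bound
    (b β lam : ℝ) (hb : 1 < b) (hβ : 0 < β) (hlam : 0 < lam)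
    (l : ℕ → ℝ)
    (hl : ∀ k : ℕ, 1 ≤ k → 0 ≤ l k ∧ l k ≤ β * (k : ℝ) ^ (-b)) :
    Summable (fun k : ℕ => l (k + 1) / (l (k + 1) + lam)) ∧
    ∑' k : ℕ, l (k + 1) / (l (k + 1) + lam) ≤
      β ^ (1 / b) * ((π / b) / Real.sin (π / b)) * lam ^ (-(1 / b)) := by
  have hb0 : (0:ℝ) < b := by linarith
  set c : ℝ := lam / β with hcdef
  have hc : 0 < c := div_pos hlam hβ
  set f : ℝ → ℝ := fun x => (1 + c * x ^ b)⁻¹ with hfdef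
  -- termwise bound
  have hterm : ∀ k : ℕ, l (k+1) / (l (k+1) + lam) ≤ f ((k:ℝ) + 1) := by
    intro k
    obtain ⟨hl0, hlu⟩ := hl (k+1) (Nat.le_add_left 1 k)
    have hk0 : (0:ℝ) < (k:ℝ) + 1 := by positivity
    have hkb : (0:ℝ) < ((k:ℝ)+1) ^ b := Real.rpow_pos_of_pos hk0 _
    have hknb : (0:ℝ) < ((k:ℝ)+1) ^ (-b) := Real.rpow_pos_of_pos hk0 _
    have hcast : ((k+1 : ℕ):ℝ) = (k:ℝ) + 1 := by push_cast; ring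
    rw [hcast] at hlu
    set L : ℝ := β * ((k:ℝ)+1) ^ (-b) with hLdef
    have hL : 0 < L := by positivity
    have step1 : l (k+1) / (l (k+1) + lam) ≤ L / (L + lam) := by
      rw [div_le_div_iff₀ (by linarith) (by linarith)]
      nlinarith
    have hmul : ((k:ℝ)+1) ^ (-b) * ((k:ℝ)+1) ^ b = 1 := by
      rw [← Real.rpow_add hk0]; norm_num
    have key : L * (1 + c * ((k:ℝ)+1) ^ b) = L + lam := by
      rw [hLdef, hcdef]
      field_simp
      linear_combination lam * hmul
    have hX : (0:ℝ) < 1 + c * ((k:ℝ)+1) ^ b := by positivity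
    have step2 : L / (L + lam) = f ((k:ℝ) + 1) := by
      show L / (L + lam) = (1 + c * ((k:ℝ)+1) ^ b)⁻¹
      rw [inv_eq_one_div, div_eq_div_iff (by linarith : L + lam ≠ 0) (ne_of_gt hX)]
      linarith [key]
    exact step1.trans_eq step2
  -- nonneg terms
  have hnn : ∀ k : ℕ, 0 ≤ l (k + 1) / (l (k + 1) + lam) := by
    intro k
    obtain ⟨hl0, _⟩ := hl (k+1) (Nat.le_add_left 1 k)
    exact div_nonneg hl0 (by linarith)
  -- summability
  have hsum : Summable (fun k : ℕ => l (k + 1) / (l (k + 1) + lam)) := by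
    have h1 : Summable (fun k : ℕ => (β * ((k:ℝ)) ^ (-b)) / lam) :=
      ((Real.summable_nat_rpow.2 (by linarith)).mul_left β).div_const lam
    have h2 : Summable (fun k : ℕ => (β * (((k+1:ℕ)):ℝ) ^ (-b)) / lam) :=
      (summable_nat_add_iff 1).2 h1
    refine Summable.of_nonneg_of_le hnn (fun k => ?_) h2
    obtain ⟨hl0, hlu⟩ := hl (k+1) (Nat.le_add_left 1 k)
    have hknb : (0:ℝ) < (((k+1:ℕ)):ℝ) ^ (-b) :=
      Real.rpow_pos_of_pos (by positivity) _
    rw [div_le_div_iff₀ (by linarith) hlam]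
    nlinarith
  refine ⟨hsum, ?_⟩
  -- antitone
  have hanti : AntitoneOn f (Ici 0) := by
    intro x hx y hy hxy
    have hxb : (0:ℝ) ≤ x ^ b := Real.rpow_nonneg hx _
    have hyb : x ^ b ≤ y ^ b := Real.rpow_le_rpow hx hxy hb0.le
    have h1 : (0:ℝ) < 1 + c * x ^ b := by positivity
    exact inv_anti₀ h1 (by nlinarith)
  have hint : IntegrableOn f (Set.Ioi 0) := integrable_f hb hc
  -- value of the integral
  have hIoi : ∫ x in Set.Ioi (0:ℝ), f x
      = β ^ (1/b) * ((π / b) / Real.sin (π / b)) * lam ^ (-(1/b)) := by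
    have ha : (0:ℝ) < c ^ (1/b : ℝ) := Real.rpow_pos_of_pos hc _
    have e1 : ∫ x in Set.Ioi (0:ℝ), f x
        = ∫ x in Set.Ioi (0:ℝ), (1 + (c ^ (1/b : ℝ) * x) ^ b)⁻¹ := by
      refine setIntegral_congr_fun measurableSet_Ioi fun x hx => ?_
      have hx0 : (0:ℝ) < x := mem_Ioi.1 hx
      have : (c ^ (1/b : ℝ) * x) ^ b = c * x ^ b := by
        rw [Real.mul_rpow ha.le hx0.le, ← Real.rpow_mul hc.le,
          one_div_mul_cancel (ne_of_gt hb0), Real.rpow_one]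
      rw [hfdef]; simp only [this]
    have e2 := MeasureTheory.integral_comp_mul_left_Ioi
      (fun y : ℝ => (1 + y ^ b)⁻¹) 0 ha
    rw [mul_zero] at e2
    rw [e1, e2, smul_eq_mul, integral_inv_one_add_rpow hb]
    have e3 : (c ^ (1/b : ℝ))⁻¹ = β ^ (1/b : ℝ) * lam ^ (-(1/b) : ℝ) := by
      rw [← Real.rpow_neg hc.le, hcdef, Real.div_rpow hlam.le hβ.le,
        Real.rpow_neg hβ.le]
      field_simp
    rw [e3]; ring
  -- partial sums bounded by the integral
  have hpartial : ∀ n : ℕ, ∑ k ∈ Finset.range n, l (k+1) / (l (k+1) + lam)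
      ≤ ∫ x in Set.Ioi (0:ℝ), f x := by
    intro n
    have h1 : ∑ k ∈ Finset.range n, l (k+1) / (l (k+1) + lam)
        ≤ ∑ k ∈ Finset.range n, f ((k:ℝ)+1) :=
      Finset.sum_le_sum fun k _ => hterm k
    have h2 := AntitoneOn.sum_le_integral (x₀ := 0) (a := n) (f := f)
      (hanti.mono fun x hx => hx.1)
    simp only [zero_add] at h2
    push_cast at h2
    have h3 : ∫ x in (0:ℝ)..(n:ℝ), f x ≤ ∫ x in Set.Ioi (0:ℝ), f x := by
      rw [intervalIntegral.integral_of_le (by positivity)]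
      apply setIntegral_mono_set hint
      · filter_upwards [ae_restrict_mem measurableSet_Ioi] with x hx
        have : (0:ℝ) ≤ x ^ b := Real.rpow_nonneg (le_of_lt (mem_Ioi.1 hx)) _
        positivity
      · exact Filter.Eventually.of_forall fun x hx => hx.1
    exact h1.trans (h2.trans h3)
  rw [← hIoi]
  exact Summable.tsum_le_of_sum_range_le hsum hpartial

end Main
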